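/- Let m ≥ 2 be an integer and 0 < λ < 2/m a real number. Then for every prime p ∈ D_λ with p > 2/(2 − λm), f_λ(p)/p ≥ m + 2 − 2/p, i.e., f_λ(p) ≥ (m+2)p − 2. -/

import Mathlib

/-- The set of natural numbers generated by `A` under addition (containing `0`). -/
def NSgen (A : Set ℕ) : Set ℕ := (AddSubmonoid.closure A : Set ℕ)

/-- `S` is a numerical semigroup: additively closed, contains `0`,
has finite complement in `ℕ`, and `S ≠ ℕ`. -/
def IsNumSgrp (S : Set ℕ) : Prop :=
  0 ∈ S ∧ (∀ a ∈ S, ∀ b ∈ S, a + b ∈ S) ∧ Sᶜ.Finite ∧ S ≠ Set.univ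

/-- The Frobenius number: the largest natural number not in `S`. -/
noncomputable def NSfrob (S : Set ℕ) : ℕ := sSup Sᶜ

/-- The genus: the number of gaps of `S`. -/
noncomputable def NSgenus (S : Set ℕ) : ℕ := Sᶜ.ncard

/-- The multiplicity: the least positive element of `S`. -/
noncomputable def NSmult (S : Set ℕ) : ℕ := sInf {n | n ∈ S ∧ n ≠ 0}

/-- The atoms (minimal generators) of `S`: the set `S* \ (S* + S*)` where `S* = S \ {0}`. -/
def NSatoms (S : Set ℕ) : Set ℕ :=
  {n | n ∈ S ∧ n ≠ 0 ∧ ¬ ∃ a, a ∈ S ∧ a ≠ 0 ∧ ∃ b, b ∈ S ∧ b ≠ 0 ∧ n = a + b}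

/-- The embedding dimension: the number of atoms of `S`. -/
noncomputable def NSembdim (S : Set ℕ) : ℕ := (NSatoms S).ncard

/-- The primes in the interval `I_lam(p) = [p, p + lam*p]`. -/
def primesIn (lam : ℝ) (p : ℕ) : Set ℕ :=
  {q | q.Prime ∧ p ≤ q ∧ (q : ℝ) ≤ p + lam * p}

/-- `S_lam(p)`: the numerical semigroup generated by the primes in `[p, p + lam*p]`. -/
def Slam (lam : ℝ) (p : ℕ) : Set ℕ := NSgen (primesIn lam p)

/-- `D_lam`: the primes `p` such that `[p, p + lam*p]` contains at least two primes. -/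
def Dlam (lam : ℝ) : Set ℕ :=
  {p | p.Prime ∧ ∃ q ∈ primesIn lam p, ∃ r ∈ primesIn lam p, q ≠ r}

/-- `f_lam(p)`: the Frobenius number of `S_lam(p)`. -/
noncomputable def flam (lam : ℝ) (p : ℕ) : ℕ := NSfrob (Slam lam p)

/-- `p_n`, the `n`-th prime in natural order (`nthPrime 1 = 2`). -/
noncomputable def nthPrime (n : ℕ) : ℕ := Nat.nth Nat.Prime (n - 1)

/-- `S_n`: the numerical semigroup generated by all primes `≥ p_n`. -/
noncomputable def Sn (n : ℕ) : Set ℕ := NSgen {q | q.Prime ∧ nthPrime n ≤ q}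

/-- `f_n`: the Frobenius number of `S_n`. -/
noncomputable def fn (n : ℕ) : ℕ := NSfrob (Sn n)

/-- `S(p)`: the numerical semigroup generated by the primes in `[p, 2p]`. -/
def Sp (p : ℕ) : Set ℕ := NSgen {q | q.Prime ∧ p ≤ q ∧ q ≤ 2 * p}

/-- Statement `A(m)`: large `N` of the same parity as `m` are sums of `m` almost equal primes. -/
def Astmt (m : ℕ) : Prop :=
  ∀ δ : ℝ, 0 < δ → ∃ N₀ : ℕ, 0 < N₀ ∧ ∀ N : ℕ, N₀ ≤ N → N % 2 = m % 2 →
    ∃ q : Fin m → ℕ, (∀ i, (q i).Prime) ∧ (∑ i, q i) = N ∧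
      ∀ i, |(N : ℝ) / m - q i| < δ * N

/-- `T(m)`: positive integers `t` such that `1+tm`, `3+tm` and `1+t(m+2)` are all prime. -/
def Tset (m : ℕ) : Set ℕ :=
  {t | 0 < t ∧ (1 + t * m).Prime ∧ (3 + t * m).Prime ∧ (1 + t * (m + 2)).Prime}

theorem statement12 (m : ℕ) (hm : 2 ≤ m) (lam : ℝ) (h0 : 0 < lam)
    (h2 : lam < 2 / (m : ℝ)) (p : ℕ) (hp : p ∈ Dlam lam)
    (hP : 2 / (2 - lam * m) < (p : ℝ)) :
    (m : ℝ) + 2 - 2 / p ≤ (flam lam p : ℝ) / p := by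
  obtain ⟨hpp, q, hq, r, hr, hqr⟩ := hp
  have hm0 : (0:ℝ) < m := by positivity
  have hlm : lam * m < 2 := by
    rw [lt_div_iff₀ hm0] at h2; linarith
  have hden : (0:ℝ) < 2 - lam * m := by linarith
  have hp1 : 1 < p := hpp.one_lt
  have hppos : (0:ℝ) < p := by exact_mod_cast Nat.lt_of_sub_eq_succ rfl |>.trans hp1
  have hkey : lam * (m:ℝ) * p < 2 * p - 2 := by
    have h := (div_lt_iff₀ hden).mp hP
    nlinarith
  -- p ≥ 3
  have hp3 : 3 ≤ p := by
    by_contra h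
    have hp2 : p = 2 := by omega
    have hm2 : (2:ℝ) ≤ m := by exact_mod_cast hm
    have hpR : (p:ℝ) = 2 := by rw [hp2]; norm_num
    have hlamhalf : lam < 1/2 := by nlinarith [hkey]
    have hqlt : q < 3 := by
      have : (q:ℝ) < 3 := by
        have := hq.2.2; rw [hpR] at this; nlinarith
      exact_mod_cast this
    have hrlt : r < 3 := by
      have : (r:ℝ) < 3 := by
        have := hr.2.2; rw [hpR] at this; nlinarith
      exact_mod_cast this
    have := hq.1.two_le; have := hr.1.two_le
    omega
  have hpodd : Odd p := hpp.odd_of_ne_two (by omega)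
  obtain ⟨c, hc⟩ := hpodd
  set x := (m+2)*p - 2 with hxdef
  have hx2 : (m+2)*p = 2*((m+2)*c) + m + 2 := by rw [hc]; ring
  -- x is not in Slam
  have hxnot : x ∉ Slam lam p := by
    intro hmem
    obtain ⟨l, hl, hsum⟩ := AddSubmonoid.exists_multiset_of_mem_closure hmem
    -- all elements odd, ≥ p, ≤ p + lam p
    have hodd : ∀ y ∈ l, Odd y := by
      intro y hy
      exact (hl y hy).1.odd_of_ne_two (by have := (hl y hy).2.1; omega)
    have hpar : ∀ t : Multiset ℕ, (∀ y ∈ t, Odd y) → t.sum % 2 = Multiset.card t % 2 := by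
      intro t
      induction t using Multiset.induction_on with
      | empty => simp
      | cons a s ihs =>
        intro h
        have ha := Nat.odd_iff.mp (h a (Multiset.mem_cons_self _ _))
        have hs := ihs (fun y hy => h y (Multiset.mem_cons_of_mem hy))
        simp only [Multiset.sum_cons, Multiset.card_cons]
        omega
    have hcardle : Multiset.card l * p ≤ l.sum := by
      have := Multiset.card_nsmul_le_sum (fun y hy => (hl y hy).2.1)
      simpa [smul_eq_mul] using this
    set k := Multiset.card l with hk
    have hxval : l.sum = x := hsum
    have hxlt : x < (m+2)*p := by omega
    have hklt : k < m + 2 := by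
      by_contra hkge
      push_neg at hkge
      have : (m+2)*p ≤ k*p := Nat.mul_le_mul_right p hkge
      omega
    have hparx : x % 2 = m % 2 := by omega
    have hpark : k % 2 = m % 2 := by
      have := hpar l hodd
      omega
    have hkm : k ≤ m := by omega
    -- real bound
    have hsumR : (l.sum : ℝ) ≤ k * ((p:ℝ) + lam * p) := by
      have h1 : ((l.map (fun y : ℕ => (y:ℝ))).sum) ≤ Multiset.card (l.map (fun y : ℕ => (y:ℝ))) • ((p:ℝ) + lam * p) := by
        apply Multiset.sum_le_card_nsmul
        intro y hy
        obtain ⟨z, hz, rfl⟩ := Multiset.mem_map.mp hy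
        exact (hl z hz).2.2
      rw [Multiset.card_map] at h1
      calc (l.sum : ℝ) = (l.map (fun y : ℕ => (y:ℝ))).sum := by
            exact_mod_cast Nat.cast_multiset_sum (R := ℝ) l
          _ ≤ k • ((p:ℝ) + lam * p) := h1
          _ = k * ((p:ℝ) + lam * p) := by rw [nsmul_eq_mul]
    have hkR : (k:ℝ) ≤ m := by exact_mod_cast hkm
    have hxR : (x:ℝ) = (m+2)*(p:ℝ) - 2 := by
      rw [hxdef]
      push_cast [Nat.cast_sub (by nlinarith [hx2] : 2 ≤ (m+2)*p)]
      ring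
    rw [hxval, hxR] at hsumR
    have hplam : (0:ℝ) < (p:ℝ) + lam * p := by positivity
    nlinarith [hsumR, hkR, hkey]
  -- bounded complement via frobeniusNumber_pair
  have cop : Nat.Coprime q r := (Nat.coprime_primes hq.1 hr.1).mpr hqr
  have hfr := frobeniusNumber_pair cop hq.1.one_lt hr.1.one_lt
  have hbdd : BddAbove (Slam lam p)ᶜ := by
    refine ⟨q*r - q - r, fun y hy => ?_⟩
    apply hfr.2
    intro hyc
    apply hy
    have : AddSubmonoid.closure {q, r} ≤ AddSubmonoid.closure (primesIn lam p) := by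
      apply AddSubmonoid.closure_mono
      intro z hz
      rcases hz with rfl | hz
      · exact hq
      · simp at hz; subst hz; exact hr
    exact this hyc
  have hle : x ≤ flam lam p := le_csSup hbdd hxnot
  have hleR : ((m:ℝ)+2)*(p:ℝ) - 2 ≤ (flam lam p : ℝ) := by
    have : (x:ℝ) ≤ (flam lam p : ℝ) := by exact_mod_cast hle
    have hxR : (x:ℝ) = (m+2)*(p:ℝ) - 2 := by
      rw [hxdef]
      push_cast [Nat.cast_sub (by nlinarith : 2 ≤ (m+2)*p)]
      ring
    linarith [hxR ▸ this]
  rw [le_div_iff₀ hppos]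
  have h2p : (2 / (p:ℝ)) * p = 2 := div_mul_cancel₀ 2 (ne_of_gt hppos)
  nlinarith [hleR]
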